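/- If f ∈ C([a,b],[0,1]), then ‖D_n^{(m)}(f) − f‖_∞ → 0 as n → ∞, and consequently for every 1 ≤ p < ∞, ‖D_n^{(m)}(f) − f‖_p → 0, with the bound ‖D_n^{(m)}(f) − f‖_p ≤ (b−a)^{1/p} ‖D_n^{(m)}(f) − f‖_∞. -/

import Mathlib

open MeasureTheory Filter Set intervalIntegral

/-- The kernel `φ_σ` built from a sigmoidal function `σ`. -/
noncomputable def phiSigma (σ : ℝ → ℝ) (x : ℝ) : ℝ := (σ (x + 1) - σ (x - 1)) / 2

/-- The Durrmeyer-type max-min neural network operator `D_n^{(m)}`. -/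
noncomputable def Dmm (χ σ : ℝ → ℝ) (a b : ℤ) (n : ℕ) (f : ℝ → ℝ) (x : ℝ) : ℝ :=
  sSup ((fun k : ℤ =>
      min ((∫ t in (a:ℝ)..(b:ℝ), χ ((n : ℝ) * t - (k : ℝ)) * f t) /
            (∫ t in (a:ℝ)..(b:ℝ), χ ((n : ℝ) * t - (k : ℝ))))
        (phiSigma σ ((n : ℝ) * x - (k : ℝ)) /
          sSup ((fun d : ℤ => phiSigma σ ((n : ℝ) * x - (d : ℝ))) ''
            Set.Icc ((n : ℤ) * a) ((n : ℤ) * b - 1)))) ''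
    Set.Icc ((n : ℤ) * a) ((n : ℤ) * b - 1))

section SigmaFacts
variable {σ : ℝ → ℝ}

lemma sigma_zero (hodd : ∀ x : ℝ, σ (-x) - 1/2 = -(σ x - 1/2)) : σ 0 = 1/2 := by
  have := hodd 0; norm_num at this; linarith

lemma sigma_one_gt (hodd : ∀ x : ℝ, σ (-x) - 1/2 = -(σ x - 1/2))
    (hconc : ConcaveOn ℝ (Set.Ici 0) σ) (h31 : σ 1 < σ 3) : 1/2 < σ 1 := by
  have h0 : σ 0 = 1/2 := sigma_zero hodd
  have h := hconc.2 (le_refl (0:ℝ)) (by norm_num : (3:ℝ) ∈ Set.Ici (0:ℝ))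
    (by norm_num : (0:ℝ) ≤ 2/3) (by norm_num : (0:ℝ) ≤ 1/3) (by norm_num)
  simp only [smul_eq_mul] at h
  norm_num at h
  linarith

lemma phi_nonneg (hmono : Monotone σ) (y : ℝ) : 0 ≤ phiSigma σ y := by
  have : σ (y - 1) ≤ σ (y + 1) := hmono (by linarith)
  simp only [phiSigma]; linarith

lemma phi_ge (hmono : Monotone σ) (hodd : ∀ x : ℝ, σ (-x) - 1/2 = -(σ x - 1/2))
    {y : ℝ} (hy : y ∈ Set.Icc (0:ℝ) 1) : (σ 1 - 1/2)/2 ≤ phiSigma σ y := by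
  have h0 : σ 0 = 1/2 := sigma_zero hodd
  have h1 : σ 1 ≤ σ (y + 1) := hmono (by linarith [hy.1])
  have h2 : σ (y - 1) ≤ σ 0 := hmono (by linarith [hy.2])
  simp only [phiSigma]; linarith

lemma phi_small (hbot : Tendsto σ atBot (nhds 0)) (htop : Tendsto σ atTop (nhds 1))
    {c : ℝ} (hc : 0 < c) : ∃ R : ℝ, 0 < R ∧ ∀ y : ℝ, R ≤ |y| → phiSigma σ y < c := by
  have ht : Tendsto (fun y => phiSigma σ y) atTop (nhds 0) := by
    have h1 : Tendsto (fun y : ℝ => σ (y + 1)) atTop (nhds 1) :=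
      htop.comp (tendsto_atTop_add_const_right _ 1 tendsto_id)
    have h2 : Tendsto (fun y : ℝ => σ (y - 1)) atTop (nhds 1) :=
      htop.comp (tendsto_atTop_add_const_right _ (-1) tendsto_id)
    have := (h1.sub h2).div_const 2
    simpa [phiSigma, sub_eq_add_neg] using this
  have hb : Tendsto (fun y => phiSigma σ y) atBot (nhds 0) := by
    have h1 : Tendsto (fun y : ℝ => σ (y + 1)) atBot (nhds 0) :=
      hbot.comp (tendsto_atBot_add_const_right _ 1 tendsto_id)
    have h2 : Tendsto (fun y : ℝ => σ (y - 1)) atBot (nhds 0) :=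
      hbot.comp (tendsto_atBot_add_const_right _ (-1) tendsto_id)
    have := (h1.sub h2).div_const 2
    simpa [phiSigma, sub_eq_add_neg] using this
  obtain ⟨R₁, hR₁⟩ := eventually_atTop.1 (ht.eventually (gt_mem_nhds hc))
  obtain ⟨R₂, hR₂⟩ := eventually_atBot.1 (hb.eventually (gt_mem_nhds hc))
  refine ⟨max (max R₁ (-R₂)) 1, lt_of_lt_of_le one_pos (le_max_right _ _), fun y hy => ?_⟩
  rcases le_abs.1 hy with h | h
  · exact hR₁ y (le_trans (le_trans (le_max_left _ _) (le_max_left _ _)) h)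
  · exact hR₂ y (by have := le_trans (le_trans (le_max_right _ _) (le_max_left _ _)) h; linarith)

end SigmaFacts


lemma integrable_affine {χ : ℝ → ℝ} (hχint : Integrable χ) {n : ℕ} (hn : 0 < n) (k : ℝ) :
    Integrable (fun t => χ ((n : ℝ) * t - k)) := by
  have h1 : Integrable (fun u => χ (u - k)) := hχint.comp_sub_right k
  exact h1.comp_mul_left' (by exact_mod_cast hn.ne' : (n:ℝ) ≠ 0)

lemma den_ge {χ : ℝ → ℝ} (hχ0 : ∀ t, 0 ≤ χ t) (hχint : Integrable χ) {n : ℕ} (hn : 0 < n)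
    {a b : ℤ} {k : ℤ} (hk : k ∈ Set.Icc ((n:ℤ)*a) ((n:ℤ)*b - 1)) :
    (∫ u in (0:ℝ)..1, χ u) / n ≤ ∫ t in (a:ℝ)..(b:ℝ), χ ((n : ℝ) * t - (k:ℝ)) := by
  rw [intervalIntegral.integral_comp_mul_sub χ (by exact_mod_cast hn.ne' : (n:ℝ) ≠ 0) (k:ℝ),
    smul_eq_mul]
  have h1 : (n:ℝ)*(a:ℝ) - (k:ℝ) ≤ 0 := by
    have h := hk.1
    have : ((n:ℤ)*a : ℝ) ≤ (k:ℝ) := by exact_mod_cast h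
    push_cast at this ⊢; linarith
  have h2 : (1:ℝ) ≤ (n:ℝ)*(b:ℝ) - (k:ℝ) := by
    have h := hk.2
    have : (k:ℝ) ≤ (((n:ℤ)*b - 1 : ℤ) : ℝ) := by exact_mod_cast h
    push_cast at this ⊢; linarith
  have hmono := intervalIntegral.integral_mono_interval (μ := volume) (f := χ)
    h1 (by norm_num : (0:ℝ) ≤ 1) h2 (Eventually.of_forall hχ0) hχint.intervalIntegrable
  have hnpos : (0:ℝ) < n := by exact_mod_cast hn
  rw [div_eq_inv_mul]
  exact mul_le_mul_of_nonneg_left hmono (by positivity)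

-- interval integrability of χ((n:ℝ)t - k) * f t
lemma chf_ii {χ f : ℝ → ℝ} (hχ0 : ∀ t, 0 ≤ χ t) (hχint : Integrable χ)
    {a b : ℤ} (hab : a < b)
    (hf01 : ∀ t ∈ Set.Icc (a:ℝ) (b:ℝ), f t ∈ Set.Icc (0:ℝ) 1)
    (hcont : ContinuousOn f (Set.Icc (a:ℝ) (b:ℝ)))
    {n : ℕ} (hn : 0 < n) (k : ℤ) :
    IntervalIntegrable (fun t => χ ((n:ℝ)*t - (k:ℝ)) * f t) volume (a:ℝ) (b:ℝ) := by
  have hab' : (a:ℝ) ≤ (b:ℝ) := by exact_mod_cast hab.le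
  have hch : Integrable (fun t => χ ((n:ℝ)*t - (k:ℝ))) := integrable_affine hχint hn _
  have hfm : AEStronglyMeasurable f (volume.restrict (Ioc (a:ℝ) (b:ℝ))) :=
    (hcont.aestronglyMeasurable measurableSet_Icc).mono_measure
      (Measure.restrict_mono Ioc_subset_Icc_self le_rfl)
  have hbd1 : ∀ᵐ t ∂(volume.restrict (Ioc (a:ℝ) (b:ℝ))),
      ‖χ ((n:ℝ)*t - (k:ℝ)) * f t‖ ≤ χ ((n:ℝ)*t - (k:ℝ)) := by
    rw [ae_restrict_iff' measurableSet_Ioc]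
    refine Eventually.of_forall fun t ht => ?_
    have hft := hf01 t (Ioc_subset_Icc_self ht)
    rw [Real.norm_eq_abs, abs_mul, abs_of_nonneg (hχ0 _)]
    calc χ ((n:ℝ)*t - (k:ℝ)) * |f t| ≤ χ ((n:ℝ)*t - (k:ℝ)) * 1 := by
          refine mul_le_mul_of_nonneg_left ?_ (hχ0 _)
          rw [abs_of_nonneg hft.1]; exact hft.2
      _ = χ ((n:ℝ)*t - (k:ℝ)) := mul_one _
  exact (intervalIntegrable_iff_integrableOn_Ioc_of_le hab').2
    (Integrable.mono' hch.integrableOn (hch.aestronglyMeasurable.restrict.mul hfm) hbd1)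

lemma c_mem {χ f : ℝ → ℝ} (hχ0 : ∀ t, 0 ≤ χ t) (hχint : Integrable χ)
    (hA : 0 < ∫ u in (0:ℝ)..1, χ u)
    {a b : ℤ} (hab : a < b)
    (hf01 : ∀ t ∈ Set.Icc (a:ℝ) (b:ℝ), f t ∈ Set.Icc (0:ℝ) 1)
    (hcont : ContinuousOn f (Set.Icc (a:ℝ) (b:ℝ)))
    {n : ℕ} (hn : 0 < n) {k : ℤ} (hk : k ∈ Set.Icc ((n:ℤ)*a) ((n:ℤ)*b - 1)) :
    (∫ t in (a:ℝ)..(b:ℝ), χ ((n:ℝ)*t - (k:ℝ)) * f t) /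
      (∫ t in (a:ℝ)..(b:ℝ), χ ((n:ℝ)*t - (k:ℝ))) ∈ Set.Icc (0:ℝ) 1 := by
  have hab' : (a:ℝ) ≤ (b:ℝ) := by exact_mod_cast hab.le
  have hnpos : (0:ℝ) < n := by exact_mod_cast hn
  have hDpos : 0 < ∫ t in (a:ℝ)..(b:ℝ), χ ((n:ℝ)*t - (k:ℝ)) :=
    lt_of_lt_of_le (div_pos hA hnpos) (den_ge hχ0 hχint hn hk)
  have hNpos : 0 ≤ ∫ t in (a:ℝ)..(b:ℝ), χ ((n:ℝ)*t - (k:ℝ)) * f t :=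
    intervalIntegral.integral_nonneg hab' fun t ht => mul_nonneg (hχ0 _) (hf01 t ht).1
  have hND : (∫ t in (a:ℝ)..(b:ℝ), χ ((n:ℝ)*t - (k:ℝ)) * f t)
      ≤ ∫ t in (a:ℝ)..(b:ℝ), χ ((n:ℝ)*t - (k:ℝ)) := by
    refine intervalIntegral.integral_mono_on hab' (chf_ii hχ0 hχint hab hf01 hcont hn k)
      (integrable_affine hχint hn _).intervalIntegrable fun t ht => ?_
    calc χ ((n:ℝ)*t - (k:ℝ)) * f t ≤ χ ((n:ℝ)*t - (k:ℝ)) * 1 :=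
          mul_le_mul_of_nonneg_left (hf01 t ht).2 (hχ0 _)
      _ = χ ((n:ℝ)*t - (k:ℝ)) := mul_one _
  exact ⟨div_nonneg hNpos hDpos.le, (div_le_one hDpos).2 hND⟩

lemma tail_tendsto {χ : ℝ → ℝ} (hχint : Integrable χ) :
    Tendsto (fun L : ℝ => (∫ u, χ u) - ∫ u in (-L)..L, χ u) atTop (nhds 0) := by
  have h := MeasureTheory.intervalIntegral_tendsto_integral hχint
    (tendsto_neg_atTop_atBot) tendsto_id (l := atTop)
  simpa using (tendsto_const_nhds (x := ∫ u, χ u) (f := atTop)).sub h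


lemma key_est (χ f : ℝ → ℝ) (hχ0 : ∀ t, 0 ≤ χ t) (hχint : Integrable χ)
    {a b : ℤ} (hab : a < b)
    (hf01 : ∀ t ∈ Set.Icc (a:ℝ) (b:ℝ), f t ∈ Set.Icc (0:ℝ) 1)
    (hcont : ContinuousOn f (Set.Icc (a:ℝ) (b:ℝ)))
    {n : ℕ} (hn : 0 < n) (k : ℤ) {x : ℝ} (hx : x ∈ Set.Icc (a:ℝ) (b:ℝ))
    {ε η L : ℝ} (hε : 0 ≤ ε) (hL : 0 ≤ L)
    (hmod : ∀ t ∈ Set.Icc (a:ℝ) (b:ℝ), |t - x| < η → |f t - f x| ≤ ε)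
    (hfar : ∀ t : ℝ, η ≤ |t - x| → L ≤ |(n:ℝ)*t - (k:ℝ)|) :
    |(∫ t in (a:ℝ)..(b:ℝ), χ ((n:ℝ)*t - (k:ℝ)) * f t) -
        f x * ∫ t in (a:ℝ)..(b:ℝ), χ ((n:ℝ)*t - (k:ℝ))| ≤
      ε * (∫ t in (a:ℝ)..(b:ℝ), χ ((n:ℝ)*t - (k:ℝ))) +
        (n:ℝ)⁻¹ * ((∫ u, χ u) - ∫ u in (-L)..L, χ u) := by
  have hab' : (a:ℝ) ≤ (b:ℝ) := by exact_mod_cast hab.le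
  have hn' : (n:ℝ) ≠ 0 := by exact_mod_cast hn.ne'
  set ch : ℝ → ℝ := fun t => χ ((n:ℝ)*t - (k:ℝ)) with hch_def
  have hch : Integrable ch := integrable_affine hχint hn _
  have hch_ii : IntervalIntegrable ch volume (a:ℝ) (b:ℝ) := hch.intervalIntegrable
  -- measurability of f on the interval
  have hfm : AEStronglyMeasurable f (volume.restrict (Ioc (a:ℝ) (b:ℝ))) :=
    (hcont.aestronglyMeasurable measurableSet_Icc).mono_measure
      (Measure.restrict_mono Ioc_subset_Icc_self le_rfl)
  have hchm : AEStronglyMeasurable ch (volume.restrict (Ioc (a:ℝ) (b:ℝ))) :=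
    hch.aestronglyMeasurable.restrict
  -- integrability of ch * f
  have hbd1 : ∀ᵐ t ∂(volume.restrict (Ioc (a:ℝ) (b:ℝ))), ‖ch t * f t‖ ≤ ch t := by
    rw [ae_restrict_iff' measurableSet_Ioc]
    refine Eventually.of_forall fun t ht => ?_
    have hft := hf01 t (Ioc_subset_Icc_self ht)
    rw [Real.norm_eq_abs, abs_mul, abs_of_nonneg (hχ0 _)]
    calc ch t * |f t| ≤ ch t * 1 := by
          refine mul_le_mul_of_nonneg_left ?_ (hχ0 _)
          rw [abs_of_nonneg hft.1]; exact hft.2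
      _ = ch t := mul_one _
  have hchf_int : IntegrableOn (fun t => ch t * f t) (Ioc (a:ℝ) (b:ℝ)) volume :=
    Integrable.mono' hch.integrableOn (hchm.mul hfm) hbd1
  have hchf_ii : IntervalIntegrable (fun t => ch t * f t) volume (a:ℝ) (b:ℝ) :=
    (intervalIntegrable_iff_integrableOn_Ioc_of_le hab').2 hchf_int
  -- integrability of ch * |f - f x|
  have hbd2 : ∀ᵐ t ∂(volume.restrict (Ioc (a:ℝ) (b:ℝ))), ‖ch t * |f t - f x|‖ ≤ 1 * ch t := by
    rw [ae_restrict_iff' measurableSet_Ioc]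
    refine Eventually.of_forall fun t ht => ?_
    have hft := hf01 t (Ioc_subset_Icc_self ht)
    have hfx := hf01 x hx
    have h1 : |f t - f x| ≤ 1 := abs_sub_le_iff.2 ⟨by linarith [hft.2, hfx.1], by linarith [hft.1, hfx.2]⟩
    rw [Real.norm_eq_abs, abs_mul, abs_of_nonneg (hχ0 _), abs_abs, one_mul]
    calc ch t * |f t - f x| ≤ ch t * 1 := mul_le_mul_of_nonneg_left h1 (hχ0 _)
      _ = ch t := mul_one _
  have habs_int : IntegrableOn (fun t => ch t * |f t - f x|) (Ioc (a:ℝ) (b:ℝ)) volume := by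
    refine Integrable.mono' (hch.integrableOn.const_mul 1) (hchm.mul ?_) hbd2
    have h : AEStronglyMeasurable (fun t => f t - f x) (volume.restrict (Ioc (a:ℝ) (b:ℝ))) :=
      hfm.sub aestronglyMeasurable_const
    simpa [Real.norm_eq_abs] using h.norm
  have habs_ii : IntervalIntegrable (fun t => ch t * |f t - f x|) volume (a:ℝ) (b:ℝ) :=
    (intervalIntegrable_iff_integrableOn_Ioc_of_le hab').2 habs_int
  -- the tail kernel g
  set s : Set ℝ := {u : ℝ | L ≤ |u|} with hs_def
  have hsmeas : MeasurableSet s := (isClosed_le continuous_const continuous_abs).measurableSet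
  set g : ℝ → ℝ := Set.indicator s χ with hg_def
  have hg0 : ∀ u, 0 ≤ g u := fun u => Set.indicator_nonneg (fun t _ => hχ0 t) u
  have hgle : ∀ u, g u ≤ χ u := fun u => Set.indicator_le_self' (fun t _ => hχ0 t) u
  have hg_int : Integrable g := by
    refine hχint.mono' (hχint.aestronglyMeasurable.indicator hsmeas) ?_
    exact Eventually.of_forall fun u => by
      rw [Real.norm_eq_abs, abs_of_nonneg (hg0 u)]; exact hgle u
  have hgc : Integrable (fun t => g ((n:ℝ)*t - (k:ℝ))) := integrable_affine hg_int hn _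
  -- Step 1 : rewrite
  have e1 : (∫ t in (a:ℝ)..(b:ℝ), ch t * f t) - f x * ∫ t in (a:ℝ)..(b:ℝ), ch t
      = ∫ t in (a:ℝ)..(b:ℝ), ch t * (f t - f x) := by
    rw [← intervalIntegral.integral_const_mul,
      ← intervalIntegral.integral_sub hchf_ii (hch_ii.const_mul (f x))]
    congr 1; ext t; ring
  have e2 : |∫ t in (a:ℝ)..(b:ℝ), ch t * (f t - f x)|
      ≤ ∫ t in (a:ℝ)..(b:ℝ), ch t * |f t - f x| := by
    refine le_trans (intervalIntegral.abs_integral_le_integral_abs hab') ?_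
    refine le_of_eq (intervalIntegral.integral_congr fun t _ => ?_)
    rw [abs_mul, abs_of_nonneg (hχ0 _)]
  -- Step 2 : pointwise bound and monotonicity
  have e3 : (∫ t in (a:ℝ)..(b:ℝ), ch t * |f t - f x|)
      ≤ ∫ t in (a:ℝ)..(b:ℝ), (ε * ch t + g ((n:ℝ)*t - (k:ℝ))) := by
    refine intervalIntegral.integral_mono_on hab' habs_ii
      ((hch_ii.const_mul ε).add hgc.intervalIntegrable) fun t ht => ?_
    by_cases hd : |t - x| < η
    · have h1 : ch t * |f t - f x| ≤ ε * ch t := by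
        calc ch t * |f t - f x| ≤ ch t * ε := mul_le_mul_of_nonneg_left (hmod t ht hd) (hχ0 _)
          _ = ε * ch t := mul_comm _ _
      linarith [hg0 ((n:ℝ)*t - (k:ℝ))]
    · have hmem : ((n:ℝ)*t - (k:ℝ)) ∈ s := hfar t (not_lt.1 hd)
      have hgeq : g ((n:ℝ)*t - (k:ℝ)) = ch t := Set.indicator_of_mem hmem χ
      have hft := hf01 t ht
      have hfx := hf01 x hx
      have h1 : |f t - f x| ≤ 1 :=
        abs_sub_le_iff.2 ⟨by linarith [hft.2, hfx.1], by linarith [hft.1, hfx.2]⟩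
      have h2 : ch t * |f t - f x| ≤ ch t := by
        calc ch t * |f t - f x| ≤ ch t * 1 := mul_le_mul_of_nonneg_left h1 (hχ0 _)
          _ = ch t := mul_one _
      have h3 : 0 ≤ ε * ch t := mul_nonneg hε (hχ0 _)
      linarith [hgeq]
  -- Step 3 : split the integral
  have e4 : (∫ t in (a:ℝ)..(b:ℝ), (ε * ch t + g ((n:ℝ)*t - (k:ℝ))))
      = ε * (∫ t in (a:ℝ)..(b:ℝ), ch t) + ∫ t in (a:ℝ)..(b:ℝ), g ((n:ℝ)*t - (k:ℝ)) := by
    rw [intervalIntegral.integral_add (hch_ii.const_mul ε) hgc.intervalIntegrable,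
      intervalIntegral.integral_const_mul]
  -- Step 4 : change of variables and extend to ℝ
  have e5 : (∫ t in (a:ℝ)..(b:ℝ), g ((n:ℝ)*t - (k:ℝ)))
      ≤ (n:ℝ)⁻¹ * ∫ u, g u := by
    rw [intervalIntegral.integral_comp_mul_sub g hn' (k:ℝ), smul_eq_mul]
    have hle : (n:ℝ)*(a:ℝ) - (k:ℝ) ≤ (n:ℝ)*(b:ℝ) - (k:ℝ) := by
      have : (n:ℝ)*(a:ℝ) ≤ (n:ℝ)*(b:ℝ) :=
        mul_le_mul_of_nonneg_left hab' (by positivity)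
      linarith
    refine mul_le_mul_of_nonneg_left ?_ (by positivity)
    rw [intervalIntegral.integral_of_le hle]
    exact setIntegral_le_integral hg_int (Eventually.of_forall hg0)
  -- Step 5 : identify the whole-line integral of g
  have e6 : (∫ u, g u) = (∫ u, χ u) - ∫ u in (-L)..L, χ u := by
    rw [hg_def, MeasureTheory.integral_indicator hsmeas]
    have hcompl : (∫ u in s, χ u) + ∫ u in sᶜ, χ u = ∫ u, χ u :=
      integral_add_compl hsmeas hχint
    have hsc : sᶜ = Ioo (-L) L := by
      ext u; simp [hs_def, abs_lt, not_le, and_comm]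
    have h7 : (∫ u in sᶜ, χ u) = ∫ u in (-L)..L, χ u := by
      rw [hsc, intervalIntegral.integral_of_le (by linarith : -L ≤ L),
        integral_Ioc_eq_integral_Ioo]
    linarith
  calc |(∫ t in (a:ℝ)..(b:ℝ), ch t * f t) - f x * ∫ t in (a:ℝ)..(b:ℝ), ch t|
      = |∫ t in (a:ℝ)..(b:ℝ), ch t * (f t - f x)| := by rw [e1]
    _ ≤ ∫ t in (a:ℝ)..(b:ℝ), ch t * |f t - f x| := e2
    _ ≤ ε * (∫ t in (a:ℝ)..(b:ℝ), ch t) + ∫ t in (a:ℝ)..(b:ℝ), g ((n:ℝ)*t - (k:ℝ)) :=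
        e3.trans (le_of_eq e4)
    _ ≤ ε * (∫ t in (a:ℝ)..(b:ℝ), ch t) + (n:ℝ)⁻¹ * ((∫ u, χ u) - ∫ u in (-L)..L, χ u) := by
        rw [← e6]; linarith [e5]

lemma Icc_int_nonempty {a b : ℤ} (hab : a < b) {n : ℕ} (hn : 0 < n) :
    (n:ℤ)*a ≤ (n:ℤ)*b - 1 := by
  have hn1 : (1:ℤ) ≤ (n:ℤ) := by exact_mod_cast hn
  have h1 : (n:ℤ)*(a+1) ≤ (n:ℤ)*b := mul_le_mul_of_nonneg_left (by linarith) (by linarith)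
  have h2 : (n:ℤ)*(a+1) = (n:ℤ)*a + (n:ℤ) := by ring
  linarith


lemma Dmm_mem {χ σ f : ℝ → ℝ} (hχ0 : ∀ t, 0 ≤ χ t) (hχint : Integrable χ)
    (hA : 0 < ∫ u in (0:ℝ)..1, χ u) (hmono : Monotone σ)
    {a b : ℤ} (hab : a < b)
    (hf01 : ∀ t ∈ Set.Icc (a:ℝ) (b:ℝ), f t ∈ Set.Icc (0:ℝ) 1)
    (hcont : ContinuousOn f (Set.Icc (a:ℝ) (b:ℝ)))
    {n : ℕ} (hn : 0 < n) (x : ℝ) :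
    Dmm χ σ a b n f x ∈ Set.Icc (0:ℝ) 1 := by
  have hmem : (n:ℤ)*a ∈ Set.Icc ((n:ℤ)*a) ((n:ℤ)*b - 1) :=
    ⟨le_refl _, Icc_int_nonempty hab hn⟩
  have hKfin : (Set.Icc ((n:ℤ)*a) ((n:ℤ)*b - 1)).Finite := Set.finite_Icc _ _
  have hKne : (Set.Icc ((n:ℤ)*a) ((n:ℤ)*b - 1)).Nonempty := ⟨_, hmem⟩
  have hS0 : 0 ≤ sSup ((fun d : ℤ => phiSigma σ ((n : ℝ) * x - (d : ℝ))) ''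
      Set.Icc ((n : ℤ) * a) ((n : ℤ) * b - 1)) :=
    le_csSup_of_le (hKfin.image _).bddAbove (mem_image_of_mem _ hmem) (phi_nonneg hmono _)
  constructor
  · refine le_csSup_of_le (hKfin.image _).bddAbove (mem_image_of_mem _ hmem) ?_
    exact le_min (c_mem hχ0 hχint hA hab hf01 hcont hn hmem).1
      (div_nonneg (phi_nonneg hmono _) hS0)
  · refine csSup_le (hKne.image _) ?_
    rintro y ⟨k, hk, rfl⟩
    exact le_trans (min_le_left _ _) (c_mem hχ0 hχint hA hab hf01 hcont hn hk).2

lemma Dmm_dist (χ σ : ℝ → ℝ)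
    (hχ0 : ∀ t, 0 ≤ χ t) (hχint : Integrable χ)
    (hA : 0 < ∫ u in (0:ℝ)..1, χ u)
    (hmono : Monotone σ)
    (hbot : Tendsto σ atBot (nhds 0)) (htop : Tendsto σ atTop (nhds 1))
    (h31 : σ 1 < σ 3) (hodd : ∀ x : ℝ, σ (-x) - 1/2 = -(σ x - 1/2))
    (hconc : ConcaveOn ℝ (Set.Ici 0) σ)
    (a b : ℤ) (hab : a < b)
    (f : ℝ → ℝ) (hcont : ContinuousOn f (Set.Icc (a:ℝ) (b:ℝ)))
    (hf01 : ∀ t ∈ Set.Icc (a:ℝ) (b:ℝ), f t ∈ Set.Icc (0:ℝ) 1) :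
    ∀ ε : ℝ, 0 < ε → ∃ N : ℕ, 0 < N ∧ ∀ n : ℕ, N ≤ n →
      ∀ x ∈ Set.Icc (a:ℝ) (b:ℝ), |Dmm χ σ a b n f x - f x| ≤ ε := by
  intro ε hε
  have hab' : (a:ℝ) ≤ (b:ℝ) := by exact_mod_cast hab.le
  set δ : ℝ := (σ 1 - 1/2)/2 with hδ_def
  have hδpos : 0 < δ := by
    have := sigma_one_gt hodd hconc h31; rw [hδ_def]; linarith
  -- far radius
  have hc' : 0 < δ * min (ε/2) 1 := mul_pos hδpos (lt_min (by linarith) one_pos)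
  obtain ⟨R, hRpos, hR⟩ := phi_small hbot htop hc'
  -- uniform continuity
  obtain ⟨η, hηpos, hη⟩ := Metric.uniformContinuousOn_iff_le.1
    (isCompact_Icc.uniformContinuousOn_of_continuous hcont) (ε/4) (by linarith)
  -- tail threshold
  have hA4 : 0 < ε/4 * ∫ u in (0:ℝ)..1, χ u := by positivity
  obtain ⟨L₁, hL₁⟩ := eventually_atTop.1 ((tail_tendsto hχint).eventually (gt_mem_nhds hA4))
  set L₀ : ℝ := max L₁ 0 with hL₀_def
  have hL₀nn : 0 ≤ L₀ := le_max_right _ _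
  have htail0 : (∫ u, χ u) - (∫ u in (-L₀)..L₀, χ u) ≤ ε/4 * ∫ u in (0:ℝ)..1, χ u :=
    (hL₁ L₀ (le_max_left _ _)).le
  -- choice of N
  set N : ℕ := ⌈(L₀ + R)/η⌉₊ + 1 with hN_def
  refine ⟨N, Nat.succ_pos _, fun n hn x hx => ?_⟩
  have hn1 : 0 < n := lt_of_lt_of_le (Nat.succ_pos _) hn
  have hnpos : (0:ℝ) < n := by exact_mod_cast hn1
  have hnN : L₀ + R ≤ (n:ℝ) * η := by
    have h1 : (L₀ + R)/η ≤ (⌈(L₀ + R)/η⌉₊ : ℝ) := Nat.le_ceil _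
    have h2 : ((⌈(L₀ + R)/η⌉₊ : ℕ) : ℝ) ≤ (n:ℝ) := by
      exact_mod_cast le_trans (Nat.le_succ _) hn
    have := le_trans h1 h2
    calc L₀ + R = ((L₀ + R)/η) * η := by field_simp
      _ ≤ (n:ℝ) * η := mul_le_mul_of_nonneg_right this hηpos.le
  -- setup for this n and x
  have hmemK : (n:ℤ)*a ∈ Set.Icc ((n:ℤ)*a) ((n:ℤ)*b - 1) :=
    ⟨le_refl _, Icc_int_nonempty hab hn1⟩
  have hKfin : (Set.Icc ((n:ℤ)*a) ((n:ℤ)*b - 1)).Finite := Set.finite_Icc _ _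
  have hKne : (Set.Icc ((n:ℤ)*a) ((n:ℤ)*b - 1)).Nonempty := ⟨_, hmemK⟩
  set w : ℤ → ℝ := fun d => phiSigma σ ((n:ℝ)*x - (d:ℝ)) with hw_def
  set S : ℝ := sSup (w '' Set.Icc ((n:ℤ)*a) ((n:ℤ)*b - 1)) with hS_def
  obtain ⟨kstar, hkstarK, hkstar⟩ : ∃ k ∈ Set.Icc ((n:ℤ)*a) ((n:ℤ)*b - 1), w k = S := by
    obtain ⟨k, hk, hk'⟩ := (hKne.image w).csSup_mem (hKfin.image w)
    exact ⟨k, hk, hk'⟩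
  have hSub : ∀ k ∈ Set.Icc ((n:ℤ)*a) ((n:ℤ)*b - 1), w k ≤ S := fun k hk =>
    le_csSup (hKfin.image w).bddAbove (mem_image_of_mem w hk)
  -- the index k₀ with (n x - k₀) ∈ [0,1]
  set k₀ : ℤ := min ⌊(n:ℝ)*x⌋ ((n:ℤ)*b - 1) with hk₀_def
  have hk₀K : k₀ ∈ Set.Icc ((n:ℤ)*a) ((n:ℤ)*b - 1) := by
    constructor
    · refine le_min (Int.le_floor.2 ?_) (Icc_int_nonempty hab hn1)
      push_cast
      exact mul_le_mul_of_nonneg_left hx.1 hnpos.le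
    · exact min_le_right _ _
  have hk₀mem : (n:ℝ)*x - (k₀:ℝ) ∈ Set.Icc (0:ℝ) 1 := by
    constructor
    · have h1 : (k₀:ℝ) ≤ (⌊(n:ℝ)*x⌋ : ℝ) := by exact_mod_cast min_le_left _ _
      have h2 := Int.floor_le ((n:ℝ)*x)
      linarith
    · rcases le_total ⌊(n:ℝ)*x⌋ ((n:ℤ)*b - 1) with h | h
      · have he : k₀ = ⌊(n:ℝ)*x⌋ := min_eq_left h
        have h2 := Int.lt_floor_add_one ((n:ℝ)*x)
        rw [he]; push_cast; linarith
      · have he : k₀ = (n:ℤ)*b - 1 := min_eq_right h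
        have h2 : (n:ℝ)*x ≤ (n:ℝ)*(b:ℝ) := mul_le_mul_of_nonneg_left hx.2 hnpos.le
        rw [he]; push_cast; linarith
  have hSδ : δ ≤ S := le_trans (phi_ge hmono hodd hk₀mem) (hSub k₀ hk₀K)
  have hSpos : 0 < S := lt_of_lt_of_le hδpos hSδ
  -- the maximizer is near x
  have hkstar_near : |(n:ℝ)*x - (kstar:ℝ)| < R := by
    by_contra hcon
    push_neg at hcon
    have h1 := hR _ hcon
    have h2 : δ * min (ε/2) 1 ≤ δ := mul_le_of_le_one_right hδpos.le (min_le_right _ _)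
    rw [show phiSigma σ ((n:ℝ)*x - (kstar:ℝ)) = w kstar from rfl, hkstar] at h1
    linarith
  -- near estimate
  have hnear : ∀ k : ℤ, k ∈ Set.Icc ((n:ℤ)*a) ((n:ℤ)*b - 1) →
      |(n:ℝ)*x - (k:ℝ)| < R →
      |(∫ t in (a:ℝ)..(b:ℝ), χ ((n:ℝ)*t - (k:ℝ)) * f t) /
        (∫ t in (a:ℝ)..(b:ℝ), χ ((n:ℝ)*t - (k:ℝ))) - f x| ≤ ε/2 := by
    intro k hkK hknear
    set D : ℝ := ∫ t in (a:ℝ)..(b:ℝ), χ ((n:ℝ)*t - (k:ℝ)) with hD_def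
    set Nk : ℝ := ∫ t in (a:ℝ)..(b:ℝ), χ ((n:ℝ)*t - (k:ℝ)) * f t with hNk_def
    have hDge : (∫ u in (0:ℝ)..1, χ u) / n ≤ D := den_ge hχ0 hχint hn1 hkK
    have hDpos : 0 < D := lt_of_lt_of_le (div_pos hA hnpos) hDge
    have hmod : ∀ t ∈ Set.Icc (a:ℝ) (b:ℝ), |t - x| < η → |f t - f x| ≤ ε/4 := by
      intro t ht hd
      have := hη t ht x hx (by rw [Real.dist_eq]; exact hd.le)
      rwa [Real.dist_eq] at this
    have hfar : ∀ t : ℝ, η ≤ |t - x| → L₀ ≤ |(n:ℝ)*t - (k:ℝ)| := by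
      intro t htx
      have h1 : |(n:ℝ)*(t-x)| = (n:ℝ) * |t - x| := by
        rw [abs_mul, abs_of_nonneg hnpos.le]
      have h2 : (n:ℝ)*(t-x) = ((n:ℝ)*t - (k:ℝ)) - ((n:ℝ)*x - (k:ℝ)) := by ring
      have h3 : |(n:ℝ)*(t-x)| ≤ |(n:ℝ)*t - (k:ℝ)| + |(n:ℝ)*x - (k:ℝ)| := by
        rw [h2]; exact abs_sub _ _
      have h4 : (n:ℝ)*η ≤ (n:ℝ)*|t-x| := mul_le_mul_of_nonneg_left htx hnpos.le
      linarith [hknear.le, hnN]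
    have hkey := key_est χ f hχ0 hχint hab hf01 hcont hn1 k hx
      (by linarith : (0:ℝ) ≤ ε/4) hL₀nn hmod hfar
    have htail' : (n:ℝ)⁻¹ * ((∫ u, χ u) - ∫ u in (-L₀)..L₀, χ u)
        ≤ ε/4 * ((∫ u in (0:ℝ)..1, χ u)/n) := by
      have := mul_le_mul_of_nonneg_left htail0 (inv_nonneg.2 hnpos.le)
      calc (n:ℝ)⁻¹ * ((∫ u, χ u) - ∫ u in (-L₀)..L₀, χ u)
          ≤ (n:ℝ)⁻¹ * (ε/4 * ∫ u in (0:ℝ)..1, χ u) := this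
        _ = ε/4 * ((∫ u in (0:ℝ)..1, χ u)/n) := by ring
    have hfin : |Nk - f x * D| ≤ ε/2 * D := by
      have h5 : ε/4 * ((∫ u in (0:ℝ)..1, χ u)/n) ≤ ε/4 * D :=
        mul_le_mul_of_nonneg_left hDge (by linarith)
      calc |Nk - f x * D| ≤ ε/4 * D + (n:ℝ)⁻¹ * ((∫ u, χ u) - ∫ u in (-L₀)..L₀, χ u) := hkey
        _ ≤ ε/4 * D + ε/4 * D := by linarith
        _ = ε/2 * D := by ring
    have heq : (Nk - f x * D) / D = Nk / D - f x := by
      rw [sub_div, mul_div_cancel_right₀ _ hDpos.ne']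
    rw [← heq, abs_div, abs_of_pos hDpos, div_le_iff₀ hDpos]
    calc |Nk - f x * D| ≤ ε/2 * D := hfin
      _ = ε/2 * D := rfl
  -- the two bounds on Dmm
  set c : ℤ → ℝ := fun k => (∫ t in (a:ℝ)..(b:ℝ), χ ((n:ℝ)*t - (k:ℝ)) * f t) /
    (∫ t in (a:ℝ)..(b:ℝ), χ ((n:ℝ)*t - (k:ℝ))) with hc_def
  have hDmm_eq : Dmm χ σ a b n f x =
      sSup ((fun k : ℤ => min (c k) (w k / S)) '' Set.Icc ((n:ℤ)*a) ((n:ℤ)*b - 1)) := rfl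
  have hupper : Dmm χ σ a b n f x ≤ f x + ε/2 := by
    rw [hDmm_eq]
    refine csSup_le (hKne.image _) ?_
    rintro y ⟨k, hk, rfl⟩
    by_cases hfark : R ≤ |(n:ℝ)*x - (k:ℝ)|
    · have h1 : w k < δ * min (ε/2) 1 := hR _ hfark
      have h2 : w k / S ≤ w k / δ :=
        div_le_div_of_nonneg_left (phi_nonneg hmono _) hδpos hSδ
      have h3 : w k / S ≤ (δ * min (ε/2) 1) / δ :=
        div_le_div₀ hc'.le h1.le hδpos hSδ
      have h4 : (δ * min (ε/2) 1) / δ = min (ε/2) 1 :=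
        mul_div_cancel_left₀ _ hδpos.ne'
      have h5 : w k / S ≤ ε/2 := by
        rw [h4] at h3; exact le_trans h3 (min_le_left _ _)
      have hfx0 : 0 ≤ f x := (hf01 x hx).1
      exact le_trans (min_le_right _ _) (by linarith)
    · push_neg at hfark
      have := hnear k hk hfark
      have h1 : c k ≤ f x + ε/2 := by
        have := (abs_le.1 this).2; linarith
      exact le_trans (min_le_left _ _) h1
  have hlower : f x - ε/2 ≤ Dmm χ σ a b n f x := by
    rw [hDmm_eq]
    have hwks : w kstar / S = 1 := by rw [hkstar]; exact div_self hSpos.ne'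
    have hmin : min (c kstar) (w kstar / S) = c kstar := by
      rw [hwks]
      exact min_eq_left (c_mem hχ0 hχint hA hab hf01 hcont hn1 hkstarK).2
    have hcks : f x - ε/2 ≤ c kstar := by
      have := (abs_le.1 (hnear kstar hkstarK hkstar_near)).1; linarith
    refine le_trans hcks ?_
    rw [← hmin]
    exact le_csSup (hKfin.image _).bddAbove (mem_image_of_mem _ hkstarK)
  have hfx0 : 0 ≤ f x := (hf01 x hx).1
  rw [abs_le]
  constructor <;> linarith

theorem Dmm_uniform_and_Lp_convergence (χ σ : ℝ → ℝ) (α : ℝ) (hα : 0 < α)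
    (hχ0 : ∀ t, 0 ≤ χ t) (hχbdd : ∃ M, ∀ t, χ t ≤ M) (hχint : Integrable χ)
    (hA : 0 < ∫ u in (0:ℝ)..1, χ u)
    (hM0 : ∃ M : ℝ, ∀ t : ℝ, ∀ s : Finset ℤ, ∑ k ∈ s, χ (t - (k : ℝ)) ≤ M)
    (hmono : Monotone σ)
    (hbot : Filter.Tendsto σ Filter.atBot (nhds 0))
    (htop : Filter.Tendsto σ Filter.atTop (nhds 1))
    (h31 : σ 1 < σ 3)
    (hodd : ∀ x : ℝ, σ (-x) - 1/2 = -(σ x - 1/2))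
    (hC2 : ContDiff ℝ 2 σ) (hconc : ConcaveOn ℝ (Set.Ici 0) σ)
    (hdecay : ∃ C B : ℝ, 0 < C ∧ 0 < B ∧ ∀ x : ℝ, x ≤ -B → σ x ≤ C * |x| ^ (-(1 + α)))
    (a b : ℤ) (hab : a < b)
    (f : ℝ → ℝ) (hcont : ContinuousOn f (Set.Icc (a:ℝ) (b:ℝ)))
    (hf01 : ∀ t ∈ Set.Icc (a:ℝ) (b:ℝ), f t ∈ Set.Icc (0:ℝ) 1) :
    Filter.Tendsto (fun n : ℕ => ⨆ x : Set.Icc (a:ℝ) (b:ℝ), |Dmm χ σ a b n f x - f x|)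
        Filter.atTop (nhds 0) ∧
      (∀ p : ℝ, 1 ≤ p → ∀ n : ℕ, 0 < n →
        (∫ x in (a:ℝ)..(b:ℝ), |Dmm χ σ a b n f x - f x| ^ p) ^ (1/p) ≤
          ((b : ℝ) - (a : ℝ)) ^ (1/p) *
            ⨆ x : Set.Icc (a:ℝ) (b:ℝ), |Dmm χ σ a b n f x - f x|) ∧
      ∀ p : ℝ, 1 ≤ p →
        Filter.Tendsto
          (fun n : ℕ => (∫ x in (a:ℝ)..(b:ℝ), |Dmm χ σ a b n f x - f x| ^ p) ^ (1/p))
          Filter.atTop (nhds 0) := by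
  have hab' : (a:ℝ) ≤ (b:ℝ) := by exact_mod_cast hab.le
  have hane : Nonempty (Set.Icc (a:ℝ) (b:ℝ)) := ⟨⟨(a:ℝ), le_refl _, hab'⟩⟩
  -- Part 1 : uniform convergence
  have hpart1 : Filter.Tendsto
      (fun n : ℕ => ⨆ x : Set.Icc (a:ℝ) (b:ℝ), |Dmm χ σ a b n f x - f x|)
      Filter.atTop (nhds 0) := by
    rw [Metric.tendsto_atTop]
    intro ε hε
    obtain ⟨N, hNpos, hN⟩ := Dmm_dist χ σ hχ0 hχint hA hmono hbot htop h31 hodd hconc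
      a b hab f hcont hf01 (ε/2) (by linarith)
    refine ⟨N, fun n hn => ?_⟩
    have hb : ∀ x : Set.Icc (a:ℝ) (b:ℝ), |Dmm χ σ a b n f x - f x| ≤ ε/2 :=
      fun x => hN n hn x x.2
    have hbdd : BddAbove (Set.range fun x : Set.Icc (a:ℝ) (b:ℝ) =>
        |Dmm χ σ a b n f x - f x|) := by
      refine ⟨ε/2, ?_⟩
      rintro _ ⟨x, rfl⟩
      exact hb x
    have hsup_le : (⨆ x : Set.Icc (a:ℝ) (b:ℝ), |Dmm χ σ a b n f x - f x|) ≤ ε/2 :=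
      ciSup_le hb
    have hsup0 : 0 ≤ ⨆ x : Set.Icc (a:ℝ) (b:ℝ), |Dmm χ σ a b n f x - f x| :=
      le_ciSup_of_le hbdd (Classical.arbitrary _) (abs_nonneg _)
    rw [Real.dist_eq, sub_zero, abs_of_nonneg hsup0]
    linarith
  have hpart2 : ∀ p : ℝ, 1 ≤ p → ∀ n : ℕ, 0 < n →
      (∫ x in (a:ℝ)..(b:ℝ), |Dmm χ σ a b n f x - f x| ^ p) ^ (1/p) ≤
        ((b : ℝ) - (a : ℝ)) ^ (1/p) *
          ⨆ x : Set.Icc (a:ℝ) (b:ℝ), |Dmm χ σ a b n f x - f x| := by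
    intro p hp n hn
    have hppos : 0 < p := lt_of_lt_of_le one_pos hp
    have h1p : (0:ℝ) ≤ 1/p := by positivity
    set M : ℝ := ⨆ x : Set.Icc (a:ℝ) (b:ℝ), |Dmm χ σ a b n f x - f x| with hM_def
    have hbdd : BddAbove (Set.range fun x : Set.Icc (a:ℝ) (b:ℝ) =>
        |Dmm χ σ a b n f x - f x|) := by
      refine ⟨1, ?_⟩
      rintro _ ⟨x, rfl⟩
      have h1 := Dmm_mem hχ0 hχint hA hmono hab hf01 hcont hn (x:ℝ)
      have h2 := hf01 x x.2
      exact abs_le.2 ⟨by linarith [h1.1, h2.2], by linarith [h1.2, h2.1]⟩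
    have hM0 : 0 ≤ M := le_ciSup_of_le hbdd (Classical.arbitrary _) (abs_nonneg _)
    have hMub : ∀ x ∈ Set.Icc (a:ℝ) (b:ℝ), |Dmm χ σ a b n f x - f x| ≤ M :=
      fun x hx => le_ciSup hbdd (⟨x, hx⟩ : Set.Icc (a:ℝ) (b:ℝ))
    have hint : (∫ x in (a:ℝ)..(b:ℝ), |Dmm χ σ a b n f x - f x| ^ p) ≤ M^p * ((b:ℝ) - (a:ℝ)) := by
      have h := intervalIntegral.norm_integral_le_of_norm_le_const
        (C := M^p) (a := (a:ℝ)) (b := (b:ℝ))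
        (f := fun x => |Dmm χ σ a b n f x - f x| ^ p) ?_
      · calc (∫ x in (a:ℝ)..(b:ℝ), |Dmm χ σ a b n f x - f x| ^ p)
            ≤ ‖∫ x in (a:ℝ)..(b:ℝ), |Dmm χ σ a b n f x - f x| ^ p‖ := le_abs_self _
          _ ≤ M^p * |(b:ℝ) - (a:ℝ)| := h
          _ = M^p * ((b:ℝ) - (a:ℝ)) := by rw [abs_of_nonneg (by linarith)]
      · intro x hx
        have hx' : x ∈ Set.Icc (a:ℝ) (b:ℝ) :=
          Ioc_subset_Icc_self (by rwa [Set.uIoc_of_le hab'] at hx)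
        rw [Real.norm_eq_abs, abs_of_nonneg (Real.rpow_nonneg (abs_nonneg _) p)]
        exact Real.rpow_le_rpow (abs_nonneg _) (hMub x hx') hppos.le
    have hI0 : 0 ≤ ∫ x in (a:ℝ)..(b:ℝ), |Dmm χ σ a b n f x - f x| ^ p :=
      intervalIntegral.integral_nonneg hab' fun x _ => Real.rpow_nonneg (abs_nonneg _) p
    calc (∫ x in (a:ℝ)..(b:ℝ), |Dmm χ σ a b n f x - f x| ^ p) ^ (1/p)
        ≤ (M^p * ((b:ℝ) - (a:ℝ))) ^ (1/p) := Real.rpow_le_rpow hI0 hint h1p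
      _ = (M^p)^(1/p) * ((b:ℝ) - (a:ℝ))^(1/p) :=
          Real.mul_rpow (Real.rpow_nonneg hM0 p) (by linarith)
      _ = M * ((b:ℝ) - (a:ℝ))^(1/p) := by
          rw [← Real.rpow_mul hM0, mul_one_div, div_self hppos.ne', Real.rpow_one]
      _ = ((b:ℝ) - (a:ℝ))^(1/p) * M := mul_comm _ _
  refine ⟨hpart1, hpart2, ?_⟩
  -- Part 3 : Lp convergence
  intro p hp
  refine squeeze_zero' (Eventually.of_forall fun n => Real.rpow_nonneg
      (intervalIntegral.integral_nonneg hab' fun x _ => Real.rpow_nonneg (abs_nonneg _) p) _)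
    (eventually_atTop.2 ⟨1, fun n hn => hpart2 p hp n hn⟩) ?_
  have h := hpart1.const_mul (((b:ℝ) - (a:ℝ))^(1/p))
  simpa [mul_comm] using h
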